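/- Let X, Y, W : 𝔻 → ℂ be holomorphic functions on the open unit disk satisfying W'(z) = −Y(z)·X'(z) for all z ∈ 𝔻, and define ℒ(z) = [[e^{−W(z)}, Y(z) e^{W(z)}], [X(z) e^{−W(z)}, (1 + X(z)Y(z)) e^{W(z)}]]. Then det ℒ(z) = 1 for all z, and ℒ(z)⁻¹·ℒ'(z) = [[0, e^{2W(z)}(Y'(z) − Y(z)² X'(z))], [e^{−2W(z)} X'(z), 0]] for all z ∈ 𝔻. -/

import Mathlib

/-- For holomorphic `X, Y, W` on the unit disk with `W' = −Y·X'`, the matrix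
`ℒ = [[e^{−W}, Y e^{W}], [X e^{−W}, (1+XY) e^{W}]]` satisfies `det ℒ = 1` and
`ℒ⁻¹ℒ' = [[0, e^{2W}(Y' − Y²X')], [e^{−2W}X', 0]]`. -/
theorem legendrian_lift_computation (X Y W : ℂ → ℂ)
    (hX : ∀ z ∈ Metric.ball (0 : ℂ) 1, DifferentiableAt ℂ X z)
    (hY : ∀ z ∈ Metric.ball (0 : ℂ) 1, DifferentiableAt ℂ Y z)
    (hW : ∀ z ∈ Metric.ball (0 : ℂ) 1, DifferentiableAt ℂ W z)
    (hLeg : ∀ z ∈ Metric.ball (0 : ℂ) 1, deriv W z = -(Y z * deriv X z))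
    (ℒ : ℂ → Matrix (Fin 2) (Fin 2) ℂ)
    (hℒ : ∀ z, ℒ z =
      !![Complex.exp (-W z), Y z * Complex.exp (W z);
         X z * Complex.exp (-W z), (1 + X z * Y z) * Complex.exp (W z)]) :
    ∀ z ∈ Metric.ball (0 : ℂ) 1,
      (ℒ z).det = 1 ∧
      (ℒ z)⁻¹ *
          !![deriv (fun w => Complex.exp (-W w)) z,
             deriv (fun w => Y w * Complex.exp (W w)) z;
             deriv (fun w => X w * Complex.exp (-W w)) z,
             deriv (fun w => (1 + X w * Y w) * Complex.exp (W w)) z] =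
        !![0, Complex.exp (2 * W z) * (deriv Y z - Y z ^ 2 * deriv X z);
           Complex.exp (-(2 * W z)) * deriv X z, 0] := by
  intro z hz
  have hXd := (hX z hz).hasDerivAt
  have hYd := (hY z hz).hasDerivAt
  have hWd : HasDerivAt W (-(Y z * deriv X z)) z := by
    rw [← hLeg z hz]; exact (hW z hz).hasDerivAt
  set x' := deriv X z with hx'
  set y' := deriv Y z with hy'
  have h1 : deriv (fun w => Complex.exp (-W w)) z
      = Complex.exp (-W z) * (Y z * x') := by
    have := (hWd.neg.cexp)
    simpa [neg_neg] using this.deriv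
  have h2 : deriv (fun w => Y w * Complex.exp (W w)) z
      = y' * Complex.exp (W z) + Y z * (Complex.exp (W z) * -(Y z * x')) := by
    exact (hYd.mul hWd.cexp).deriv
  have h3 : deriv (fun w => X w * Complex.exp (-W w)) z
      = x' * Complex.exp (-W z) + X z * (Complex.exp (-W z) * (Y z * x')) := by
    have h := (hXd.mul hWd.neg.cexp).deriv
    simp only [neg_neg] at h
    exact h
  have h4 : deriv (fun w => (1 + X w * Y w) * Complex.exp (W w)) z
      = (x' * Y z + X z * y') * Complex.exp (W z)
        + (1 + X z * Y z) * (Complex.exp (W z) * -(Y z * x')) := by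
    have h := (((hasDerivAt_const z (1:ℂ)).add (hXd.mul hYd)).mul hWd.cexp).deriv
    simp only [zero_add] at h
    exact h
  have hE : Complex.exp (W z) ≠ 0 := Complex.exp_ne_zero _
  have hdet : (ℒ z).det = 1 := by
    rw [hℒ z, Matrix.det_fin_two_of]
    simp [Complex.exp_neg]
    field_simp
    ring
  refine ⟨hdet, ?_⟩
  have hinv : (ℒ z)⁻¹ = !![(1 + X z * Y z) * Complex.exp (W z), -(Y z * Complex.exp (W z));
      -(X z * Complex.exp (-W z)), Complex.exp (-W z)] := by
    rw [Matrix.inv_def, hdet, hℒ z, Matrix.adjugate_fin_two_of]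
    simp
  rw [hinv, h1, h2, h3, h4]
  have hEn : Complex.exp (-W z) = (Complex.exp (W z))⁻¹ := Complex.exp_neg _
  have hE2 : Complex.exp (2 * W z) = Complex.exp (W z) * Complex.exp (W z) := by
    rw [← Complex.exp_add]; ring_nf
  have hE2n : Complex.exp (-(2 * W z)) = (Complex.exp (W z) * Complex.exp (W z))⁻¹ := by
    rw [Complex.exp_neg, hE2]
  ext i j
  fin_cases i <;> fin_cases j <;>
    simp [Matrix.mul_apply, Fin.sum_univ_two, hEn, hE2, hE2n] <;>
    (try field_simp) <;> (try ring)
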